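/- Let $G$ be a group with a bi-invariant mean and let $H \le G$ have infinite index. If $T, T' \subseteq G$ are finite sets, then $G \neq T^{-1} H T'$, i.e., the union of the finitely many double translates $t^{-1} H t'$ for $t \in T$, $t' \in T'$ does not cover $G$. -/

import Mathlib

/-- The space `ℓ∞(G)` of bounded real-valued functions on `G`, as a submodule of `G → ℝ`. -/
def Linf (G : Type*) : Submodule ℝ (G → ℝ) where
  carrier := {f | ∃ C : ℝ, ∀ x, |f x| ≤ C}
  add_mem' := by
    rintro f g ⟨C, hC⟩ ⟨D, hD⟩
    exact ⟨C + D, fun x => by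
      simpa using (abs_add_le (f x) (g x)).trans (add_le_add (hC x) (hD x))⟩
  zero_mem' := ⟨0, fun x => by simp⟩
  smul_mem' := by
    rintro c f ⟨C, hC⟩
    exact ⟨|c| * C, fun x => by
      simpa [abs_mul] using mul_le_mul_of_nonneg_left (hC x) (abs_nonneg c)⟩

open Classical in
/-- The characteristic function of a set, as an element of `ℓ∞`. -/
noncomputable def chi {G : Type*} (A : Set G) : Linf G :=
  ⟨fun x => if x ∈ A then 1 else 0, ⟨1, fun x => by by_cases h : x ∈ A <;> simp [h]⟩⟩

/-- Left translation action on `ℓ∞(G)`: `(g • φ)(x) = φ(g⁻¹ x)`. -/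
def lT {G : Type*} [Group G] (g : G) (φ : Linf G) : Linf G :=
  ⟨fun x => (φ : G → ℝ) (g⁻¹ * x), by obtain ⟨C, hC⟩ := φ.2; exact ⟨C, fun x => hC _⟩⟩

/-- Right translation action on `ℓ∞(G)`: `(φ • g)(x) = φ(x g)`. -/
def rT {G : Type*} [Group G] (g : G) (φ : Linf G) : Linf G :=
  ⟨fun x => (φ : G → ℝ) (x * g), by obtain ⟨C, hC⟩ := φ.2; exact ⟨C, fun x => hC _⟩⟩

/-- A mean on `G`: a normalized positive linear functional on `ℓ∞(G)`. -/
structure Mean (G : Type*) where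
  toFun : Linf G →ₗ[ℝ] ℝ
  normalized : toFun (chi Set.univ) = 1
  pos : ∀ φ : Linf G, (∀ x, 0 ≤ (φ : G → ℝ) x) → 0 ≤ toFun φ

/-- A mean is left invariant if it is invariant under left translations. -/
def Mean.LeftInvariant {G : Type*} [Group G] (m : Mean G) : Prop :=
  ∀ (g : G) (φ : Linf G), m.toFun (lT g φ) = m.toFun φ

/-- A mean is right invariant if it is invariant under right translations. -/
def Mean.RightInvariant {G : Type*} [Group G] (m : Mean G) : Prop :=
  ∀ (g : G) (φ : Linf G), m.toFun (rT g φ) = m.toFun φ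

section Aux

variable {G : Type*}

lemma mean_mono (m : Mean G) {φ ψ : Linf G} (h : ∀ x, (φ : G → ℝ) x ≤ (ψ : G → ℝ) x) :
    m.toFun φ ≤ m.toFun ψ := by
  have h0 : 0 ≤ m.toFun (ψ - φ) := m.pos _ (fun x => by
    have := h x
    simp only [Submodule.coe_sub, Pi.sub_apply]
    linarith)
  have := m.toFun.map_sub ψ φ
  linarith

lemma chi_nonneg (A : Set G) (x : G) : 0 ≤ (chi A : G → ℝ) x := by
  classical
  by_cases h : x ∈ A <;> simp [chi, h]

lemma mean_chi_subgroup_eq_zero [Group G] (m : Mean G) (hml : m.LeftInvariant)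
    (H : Subgroup G) (hH : Infinite (G ⧸ H)) :
    m.toFun (chi (H : Set G)) = 0 := by
  classical
  set c := m.toFun (chi (H : Set G)) with hc
  have hc0 : 0 ≤ c := m.pos _ (chi_nonneg _)
  have key : ∀ n : ℕ, (n : ℝ) * c ≤ 1 := by
    intro n
    set e := Infinite.natEmbedding (G ⧸ H) with he
    set φ : Linf G := ∑ i ∈ Finset.range n, lT (Quotient.out (e i)) (chi (H : Set G)) with hφ
    have hφval : ∀ x : G, (φ : G → ℝ) x =
        ∑ i ∈ Finset.range n, (if QuotientGroup.mk x = e i then (1 : ℝ) else 0) := by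
      intro x
      have : (φ : G → ℝ) x
          = ∑ i ∈ Finset.range n, ((lT (Quotient.out (e i)) (chi (H : Set G)) : G → ℝ) x) := by
        rw [hφ]
        induction (Finset.range n) using Finset.induction with
        | empty => simp
        | insert hni ih => simp_all
      rw [this]
      refine Finset.sum_congr rfl fun i _ => ?_
      simp only [lT, chi]
      have hiff : (Quotient.out (e i))⁻¹ * x ∈ H ↔ QuotientGroup.mk x = e i := by
        rw [← QuotientGroup.eq, QuotientGroup.out_eq', eq_comm]
      by_cases h : QuotientGroup.mk x = e i
      · simp [hiff.mpr h, h]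
      · have h2 : (Quotient.out (e i))⁻¹ * x ∉ H := fun hh => h (hiff.mp hh)
        simp [h2, h]
    have hle : ∀ x, (φ : G → ℝ) x ≤ (chi (Set.univ : Set G) : G → ℝ) x := by
      intro x
      rw [hφval]
      have : ∑ i ∈ Finset.range n, (if QuotientGroup.mk x = e i then (1 : ℝ) else 0) ≤ 1 := by
        by_cases hx : ∃ i ∈ Finset.range n, QuotientGroup.mk x = e i
        · obtain ⟨i, hi, hxi⟩ := hx
          rw [Finset.sum_eq_single i]
          · simp [hxi]
          · intro j hj hji
            have : QuotientGroup.mk x ≠ e j := by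
              intro h
              exact hji (e.injective (hxi ▸ h)).symm
            simp [this]
          · intro h; exact absurd hi h
        · push_neg at hx
          rw [Finset.sum_eq_zero (fun i hi => by simp [hx i hi])]
          norm_num
      simpa [chi] using this
    have hmφ : m.toFun φ = (n : ℝ) * c := by
      rw [hφ, map_sum]
      rw [Finset.sum_congr rfl (fun i _ => hml (Quotient.out (e i)) (chi (H : Set G)))]
      simp [hc, mul_comm]
    calc (n : ℝ) * c = m.toFun φ := hmφ.symm
      _ ≤ m.toFun (chi Set.univ) := mean_mono m hle
      _ = 1 := m.normalized
  by_contra hne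
  have hcpos : 0 < c := lt_of_le_of_ne hc0 (Ne.symm hne)
  obtain ⟨n, hn⟩ := exists_nat_gt (1 / c)
  have := key n
  have : (1 / c) * c < (n : ℝ) * c := by
    exact mul_lt_mul_of_pos_right hn hcpos
  rw [one_div_mul_cancel (ne_of_gt hcpos)] at this
  linarith [key n]

end Aux

/-- If `G` has a bi-invariant mean and `H ≤ G` has infinite index, then
for finite `T, T' ⊆ G` the union of the double translates `t⁻¹ H t'` does not cover `G`,
i.e. `G ≠ T⁻¹ H T'`. -/
theorem not_covered_by_double_translates {G : Type*} [Group G] (m : Mean G)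
    (hml : m.LeftInvariant) (hmr : m.RightInvariant)
    (H : Subgroup G) (hH : Infinite (G ⧸ H))
    (T T' : Set G) (hT : T.Finite) (hT' : T'.Finite) :
    ∃ g : G, ∀ t ∈ T, ∀ t' ∈ T', ∀ h ∈ H, g ≠ t⁻¹ * h * t' := by
  classical
  by_contra hcon
  push_neg at hcon
  set S := hT.toFinset
  set S' := hT'.toFinset
  set ψ : Linf G := ∑ t ∈ S, ∑ t' ∈ S', rT t'⁻¹ (lT t⁻¹ (chi (H : Set G))) with hψ
  have hterm : ∀ (t t' x : G),
      ((rT t'⁻¹ (lT t⁻¹ (chi (H : Set G))) : Linf G) : G → ℝ) x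
        = if t * (x * t'⁻¹) ∈ H then (1:ℝ) else 0 := by
    intro t t' x
    simp [rT, lT, chi]
  have hψval : ∀ x : G, (ψ : G → ℝ) x
      = ∑ t ∈ S, ∑ t' ∈ S', (if t * (x * t'⁻¹) ∈ H then (1:ℝ) else 0) := by
    intro x
    rw [hψ]
    rw [show ((∑ t ∈ S, ∑ t' ∈ S', rT t'⁻¹ (lT t⁻¹ (chi (H : Set G))) : Linf G) : G → ℝ)
        = ∑ t ∈ S, ∑ t' ∈ S',
            ((rT t'⁻¹ (lT t⁻¹ (chi (H : Set G))) : Linf G) : G → ℝ) by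
      push_cast [Submodule.coe_sum]
      rfl]
    simp only [Finset.sum_apply]
    exact Finset.sum_congr rfl fun t _ => Finset.sum_congr rfl fun t' _ => hterm t t' x
  have hψ0 : m.toFun ψ = 0 := by
    rw [hψ, map_sum]
    rw [Finset.sum_eq_zero]
    intro t _
    rw [map_sum, Finset.sum_eq_zero]
    intro t' _
    rw [hmr t'⁻¹, hml t⁻¹, mean_chi_subgroup_eq_zero m hml H hH]
  have hge : ∀ x, (chi (Set.univ : Set G) : G → ℝ) x ≤ (ψ : G → ℝ) x := by
    intro x
    obtain ⟨t, ht, t', ht', h, hh, hx⟩ := hcon x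
    have ht1 : t ∈ S := hT.mem_toFinset.mpr ht
    have ht'1 : t' ∈ S' := hT'.mem_toFinset.mpr ht'
    rw [hψval]
    have hmem : t * (x * t'⁻¹) ∈ H := by
      rw [hx]
      group
      simpa using hh
    have h1 : (1:ℝ) ≤ ∑ t' ∈ S', (if t * (x * t'⁻¹) ∈ H then (1:ℝ) else 0) := by
      calc (1:ℝ) = (if t * (x * t'⁻¹) ∈ H then (1:ℝ) else 0) := by simp [hmem]
        _ ≤ _ := Finset.single_le_sum
            (f := fun s => (if t * (x * s⁻¹) ∈ H then (1:ℝ) else 0))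
            (fun s _ => by split <;> norm_num) ht'1
    calc (chi (Set.univ : Set G) : G → ℝ) x = 1 := by simp [chi]
      _ ≤ ∑ t' ∈ S', (if t * (x * t'⁻¹) ∈ H then (1:ℝ) else 0) := h1
      _ ≤ _ := Finset.single_le_sum
          (f := fun t => ∑ t' ∈ S', (if t * (x * t'⁻¹) ∈ H then (1:ℝ) else 0))
          (fun s _ => Finset.sum_nonneg fun s' _ => by positivity) ht1
  have : (1:ℝ) ≤ 0 := by
    calc (1:ℝ) = m.toFun (chi Set.univ) := m.normalized.symm
      _ ≤ m.toFun ψ := mean_mono m hge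
      _ = 0 := hψ0
  linarith
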